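/- arXiv:1611.04498 — 3 statements merged into one kernel-verified Lean document; each statement's English description precedes it below -/
import Mathlib

section
/- There is an absolute constant C > 0 such that for every real N ≥ 1 and every t ∈ ℝ, ∫_{−1/2}^{1/2} B(u) B(t−u) du ≤ C · N · log(2 + N‖t‖) / (2 + N‖t‖), where B(u) = min(N, ‖u‖^{−1}). -/
/-- `‖t‖`, the distance from `t` to the nearest integer. -/
noncomputable def distNearestInt (t : ℝ) : ℝ := |t - (round t : ℤ)|

/-- `B(t) = min(N, ‖t‖⁻¹)` (interpreted as `N` when `‖t‖ = 0`). -/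
noncomputable def Bfun (N t : ℝ) : ℝ :=
  if distNearestInt t = 0 then N else min N (distNearestInt t)⁻¹

lemma dni_nonneg (x : ℝ) : 0 ≤ distNearestInt x := abs_nonneg _

lemma dni_le_half (x : ℝ) : distNearestInt x ≤ 1 / 2 := abs_sub_round x

/-- `round` minimizes distance to integers. -/
lemma dni_le (x : ℝ) (k : ℤ) : distNearestInt x ≤ |x - k| := by
  rcases eq_or_ne k (round x) with rfl | h
  · exact le_of_eq rfl
  · have hne : k - round x ≠ 0 := sub_ne_zero.mpr h
    have h1 : (1 : ℝ) ≤ |(k : ℝ) - (round x : ℝ)| := by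
      have h0 := Int.one_le_abs hne
      have h0' : (1 : ℝ) ≤ ((|k - round x| : ℤ) : ℝ) := by exact_mod_cast h0
      rwa [Int.cast_abs, Int.cast_sub] at h0'
    have h2 : |x - (round x : ℝ)| ≤ 1 / 2 := abs_sub_round x
    have h3 : |(k : ℝ) - (round x : ℝ)| ≤ |x - (round x : ℝ)| + |x - (k : ℝ)| := by
      have e : (k : ℝ) - (round x : ℝ) = (x - (round x : ℝ)) - (x - (k : ℝ)) := by ring
      rw [e, sub_eq_add_neg]
      exact (abs_add_le _ _).trans (by rw [abs_neg])
    unfold distNearestInt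
    linarith

lemma abs_le_dni {u : ℝ} (h : |u| ≤ 1 / 2) : |u| ≤ distNearestInt u := by
  unfold distNearestInt
  rcases eq_or_ne (round u) 0 with h0 | h0
  · simp [h0]
  · have h1 : (1 : ℝ) ≤ |(round u : ℝ)| := by
      have h0' := Int.one_le_abs h0
      have : (1 : ℝ) ≤ ((|round u| : ℤ) : ℝ) := by exact_mod_cast h0'
      rwa [Int.cast_abs] at this
    have h2 : |(round u : ℝ)| - |u| ≤ |u - (round u : ℝ)| := by
      have := abs_sub_abs_le_abs_sub ((round u : ℤ) : ℝ) u
      rwa [abs_sub_comm] at this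
    linarith

lemma dni_eq_abs {u : ℝ} (h : |u| ≤ 1 / 2) : distNearestInt u = |u| := by
  refine le_antisymm ?_ (abs_le_dni h)
  simpa using dni_le u 0

lemma dni_sub (a b : ℝ) : distNearestInt a - distNearestInt b ≤ distNearestInt (a - b) := by
  have h1 : distNearestInt a ≤ |a - ((round (a - b) + round b : ℤ) : ℝ)| := dni_le a _
  have h2 : |a - ((round (a - b) + round b : ℤ) : ℝ)|
      ≤ |(a - b) - ((round (a - b) : ℤ) : ℝ)| + |b - ((round b : ℤ) : ℝ)| := by
    push_cast
    have e : a - ((round (a - b) : ℝ) + (round b : ℝ))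
        = ((a - b) - (round (a - b) : ℝ)) + (b - (round b : ℝ)) := by ring
    rw [e]
    exact abs_add_le _ _
  unfold distNearestInt at *
  linarith

lemma dni_neg (x : ℝ) : distNearestInt (-x) = distNearestInt x := by
  have key : ∀ y : ℝ, distNearestInt (-y) ≤ distNearestInt y := by
    intro y
    have h := dni_le (-y) (-round y)
    refine h.trans_eq ?_
    unfold distNearestInt
    push_cast
    rw [show -y - -(round y : ℝ) = -(y - (round y : ℝ)) by ring, abs_neg]
  have h2 := key (-x)
  rw [neg_neg] at h2
  exact le_antisymm (key x) h2

lemma Bfun_nonneg {N : ℝ} (hN : 0 ≤ N) (x : ℝ) : 0 ≤ Bfun N x := by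
  unfold Bfun
  split
  · exact hN
  · exact le_min hN (inv_nonneg.mpr (dni_nonneg x))

lemma Bfun_le_N {N : ℝ} (x : ℝ) : Bfun N x ≤ N := by
  unfold Bfun
  split
  · exact le_rfl
  · exact min_le_left _ _

lemma Bfun_le {N c : ℝ} (x : ℝ) (hN : 1 ≤ N) (hc : 0 ≤ c) (h : c ≤ distNearestInt x) :
    Bfun N x ≤ 2 * N / (1 + N * c) := by
  have hN0 : (0 : ℝ) < N := lt_of_lt_of_le one_pos hN
  have hden : (0 : ℝ) < 1 + N * c := by positivity
  rcases le_or_gt (N * c) 1 with hle | hgt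
  · refine (Bfun_le_N x).trans ?_
    rw [le_div_iff₀ hden]
    nlinarith
  · have hc0 : 0 < c := by nlinarith
    have hd0 : 0 < distNearestInt x := lt_of_lt_of_le hc0 h
    unfold Bfun
    rw [if_neg (ne_of_gt hd0)]
    have h1 : (distNearestInt x)⁻¹ ≤ c⁻¹ := by gcongr
    have h2 : c⁻¹ ≤ 2 * N / (1 + N * c) := by
      rw [inv_eq_one_div, div_le_div_iff₀ hc0 hden]
      nlinarith
    exact (min_le_right _ _).trans (h1.trans h2)

lemma zero_not_mem_uIcc {a b : ℝ} (ha : 0 < a) (hb : 0 < b) : (0 : ℝ) ∉ Set.uIcc a b := by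
  intro h
  rcases Set.mem_uIcc.mp h with ⟨h1, h2⟩ | ⟨h1, h2⟩ <;> linarith

set_option maxHeartbeats 1000000 in
/-- `(B * B)(t) = ∫_{-1/2}^{1/2} B(u) B(t-u) du ≤ C N log(2 + N‖t‖)/(2 + N‖t‖)`. -/
theorem stmt_9 :
    ∃ C : ℝ, 0 < C ∧ ∀ (N : ℝ), 1 ≤ N → ∀ t : ℝ,
      (∫ u in (-(1 : ℝ) / 2)..(1 / 2), Bfun N u * Bfun N (t - u))
        ≤ C * N * Real.log (2 + N * distNearestInt t) / (2 + N * distNearestInt t) := by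
  refine ⟨100, by norm_num, ?_⟩
  intro N hN t
  have hN0 : (0 : ℝ) < N := lt_of_lt_of_le one_pos hN
  have hNne : N ≠ 0 := ne_of_gt hN0
  set δ : ℝ := distNearestInt t with hδdef
  have hδ0 : 0 ≤ δ := dni_nonneg t
  have hδh : δ ≤ 1 / 2 := dni_le_half t
  set g : ℝ → ℝ :=
    fun u => (2 * N / (1 + N * |u|)) * (2 * N / (1 + N * |(|u|) - δ|)) with hg
  have hd1 : ∀ u : ℝ, (0 : ℝ) < 1 + N * |u| := fun u => by positivity
  have hd2 : ∀ u : ℝ, (0 : ℝ) < 1 + N * |(|u|) - δ| := fun u => by positivity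
  have hgc : Continuous g := by
    rw [hg]
    exact (continuous_const.div (by continuity) fun u => ne_of_gt (hd1 u)).mul
      (continuous_const.div (by continuity) fun u => ne_of_gt (hd2 u))
  have hgnn : ∀ u : ℝ, 0 ≤ g u := fun u => by
    rw [hg]
    positivity
  -- Step A : pointwise bound
  have stepA : (∫ u in (-(1 : ℝ) / 2)..(1 / 2), Bfun N u * Bfun N (t - u))
      ≤ ∫ u in (-(1 : ℝ) / 2)..(1 / 2), g u := by
    have hab : (-(1 : ℝ) / 2) ≤ 1 / 2 := by norm_num
    rw [intervalIntegral.integral_of_le hab, intervalIntegral.integral_of_le hab]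
    refine MeasureTheory.integral_mono_of_nonneg ?_ hgc.integrableOn_Ioc ?_
    · exact MeasureTheory.ae_of_all _ fun u =>
        mul_nonneg (Bfun_nonneg hN0.le u) (Bfun_nonneg hN0.le _)
    · refine (MeasureTheory.ae_restrict_iff' measurableSet_Ioc).mpr
        (MeasureTheory.ae_of_all _ ?_)
      intro u hu
      have hu2 : |u| ≤ 1 / 2 := by
        rw [abs_le]
        exact ⟨by linarith [hu.1], hu.2⟩
      have e1 : distNearestInt u = |u| := dni_eq_abs hu2
      have h1 : Bfun N u ≤ 2 * N / (1 + N * |u|) :=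
        Bfun_le u hN (abs_nonneg u) (le_of_eq e1.symm)
      have hkey : |(|u|) - δ| ≤ distNearestInt (t - u) := by
        rw [abs_sub_le_iff]
        constructor
        · have h3 := dni_sub u t
          have h4 : distNearestInt (u - t) = distNearestInt (t - u) := by
            rw [← neg_sub t u, dni_neg]
          rw [e1] at h3
          linarith [h3, h4.symm.le]
        · have h5 := dni_sub t u
          rw [e1] at h5
          linarith
      have h2 : Bfun N (t - u) ≤ 2 * N / (1 + N * |(|u|) - δ|) :=
        Bfun_le _ hN (abs_nonneg _) hkey
      calc Bfun N u * Bfun N (t - u)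
          ≤ (2 * N / (1 + N * |u|)) * (2 * N / (1 + N * |(|u|) - δ|)) :=
            mul_le_mul h1 h2 (Bfun_nonneg hN0.le _) (by positivity)
        _ = g u := by rw [hg]
  -- Step B : symmetry
  have hgint : ∀ a b : ℝ, IntervalIntegrable g MeasureTheory.volume a b :=
    fun a b => hgc.intervalIntegrable a b
  have geven : ∀ x : ℝ, g (-x) = g x := fun x => by rw [hg]; simp [abs_neg]
  have splitB : (∫ u in (-(1 : ℝ) / 2)..(1 / 2), g u)
      = (∫ u in (-(1 : ℝ) / 2)..(0 : ℝ), g u) + ∫ u in (0 : ℝ)..(1 / 2 : ℝ), g u :=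
    (intervalIntegral.integral_add_adjacent_intervals (hgint _ _) (hgint _ _)).symm
  have eB : (∫ u in (-(1 : ℝ) / 2)..(0 : ℝ), g u) = ∫ u in (0 : ℝ)..(1 / 2 : ℝ), g u := by
    have h2 : (∫ x in (0 : ℝ)..(1 / 2 : ℝ), g (-x)) = ∫ x in (-(1 : ℝ) / 2)..(0 : ℝ), g x := by
      rw [intervalIntegral.integral_comp_neg]
      congr 1 <;> norm_num
    rw [← h2]
    exact intervalIntegral.integral_congr fun x _ => geven x
  -- the two main integral computations
  have main0 : ∀ a : ℝ, 0 ≤ a → (∫ u in (0 : ℝ)..a, (N * u + 1)⁻¹)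
      = N⁻¹ * Real.log (N * a + 1) := by
    intro a ha
    have h := intervalIntegral.integral_comp_mul_add (a := 0) (b := a)
      (fun x : ℝ => x⁻¹) hNne 1
    rw [h, show N * (0 : ℝ) + 1 = 1 by ring,
      integral_inv (zero_not_mem_uIcc one_pos (by nlinarith)),
      smul_eq_mul, div_one]
  -- ∫_δ^{1/2} (N u + 1)⁻¹
  have mainB : (∫ u in δ..(1 / 2 : ℝ), (N * u + 1)⁻¹)
      = N⁻¹ * Real.log ((N * (1 / 2) + 1) / (N * δ + 1)) := by
    have h := intervalIntegral.integral_comp_mul_add (a := δ) (b := (1 / 2 : ℝ))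
      (fun x : ℝ => x⁻¹) hNne 1
    rw [h, integral_inv (zero_not_mem_uIcc (by nlinarith) (by nlinarith)), smul_eq_mul]
  have main0' : (∫ u in (0 : ℝ)..δ, (-N * u + (N * δ + 1))⁻¹)
      = N⁻¹ * Real.log (N * δ + 1) := by
    have h := intervalIntegral.integral_comp_mul_add (a := 0) (b := δ)
      (fun x : ℝ => x⁻¹) (neg_ne_zero.mpr hNne) (N * δ + 1)
    rw [h, show -N * (0 : ℝ) + (N * δ + 1) = N * δ + 1 by ring,
      show -N * δ + (N * δ + 1) = 1 by ring,
      integral_inv (zero_not_mem_uIcc (by nlinarith) one_pos), smul_eq_mul,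
      show (1 : ℝ) / (N * δ + 1) = (N * δ + 1)⁻¹ from one_div _, Real.log_inv, inv_neg]
    ring
  -- I1
  have hI1 : (∫ u in (0 : ℝ)..δ, g u) = 8 * N * Real.log (N * δ + 1) / (2 + N * δ) := by
    have hcong : Set.EqOn g
        (fun u => (4 * N ^ 2 / (2 + N * δ)) * ((N * u + 1)⁻¹ + (-N * u + (N * δ + 1))⁻¹))
        (Set.uIcc 0 δ) := by
      intro u hu
      rw [Set.uIcc_of_le hδ0] at hu
      obtain ⟨h0u, huδ⟩ := hu
      have e1 : |u| = u := abs_of_nonneg h0u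
      have hNu : 0 ≤ N * u := mul_nonneg hN0.le h0u
      have hNuδ : N * u ≤ N * δ := by nlinarith
      have e2 : |u - δ| = δ - u := by rw [abs_of_nonpos (by linarith)]; ring
      simp only [hg, e1, e2]
      have p1 : (0 : ℝ) < N * u + 1 := by linarith
      have p2 : (0 : ℝ) < -N * u + (N * δ + 1) := by linarith
      have p3 : (0 : ℝ) < 2 + N * δ := by linarith
      have d2 : (0 : ℝ) < 1 + N * (δ - u) := by nlinarith
      have d1 : (0 : ℝ) < 1 + N * u := by linarith
      rw [inv_add_inv p1.ne' p2.ne', div_mul_div_comm, div_mul_div_comm,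
        div_eq_div_iff (mul_pos d1 d2).ne' (mul_pos p3 (mul_pos p1 p2)).ne']
      ring
    have ci1 : IntervalIntegrable (fun u : ℝ => (N * u + 1)⁻¹) MeasureTheory.volume 0 δ := by
      refine ContinuousOn.intervalIntegrable (ContinuousOn.inv₀ (by fun_prop) ?_)
      intro u hu
      rw [Set.uIcc_of_le hδ0] at hu
      nlinarith [mul_nonneg hN0.le hu.1]
    have ci2 : IntervalIntegrable (fun u : ℝ => (-N * u + (N * δ + 1))⁻¹)
        MeasureTheory.volume 0 δ := by
      refine ContinuousOn.intervalIntegrable (ContinuousOn.inv₀ (by fun_prop) ?_)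
      intro u hu
      rw [Set.uIcc_of_le hδ0] at hu
      nlinarith [mul_le_mul_of_nonneg_left hu.2 hN0.le]
    rw [intervalIntegral.integral_congr hcong, intervalIntegral.integral_const_mul,
      intervalIntegral.integral_add ci1 ci2, main0 δ hδ0, main0']
    have p3 : (0 : ℝ) < 2 + N * δ := by nlinarith
    field_simp
    ring
  -- I2, case δ > 0
  have hI2 : 0 < δ → (∫ u in δ..(1 / 2 : ℝ), g u) ≤ 4 / δ * Real.log (N * δ + 1) := by
    intro hδpos
    have hcong : Set.EqOn g
        (fun u => (4 * N / δ) * ((N * u + (1 - N * δ))⁻¹ - (N * u + 1)⁻¹))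
        (Set.uIcc δ (1 / 2 : ℝ)) := by
      intro u hu
      rw [Set.uIcc_of_le hδh] at hu
      obtain ⟨hδu, hu2⟩ := hu
      have h0u : 0 ≤ u := le_trans hδ0 hδu
      have e1 : |u| = u := abs_of_nonneg h0u
      have e2 : |u - δ| = u - δ := abs_of_nonneg (by linarith)
      simp only [hg, e1, e2]
      have hNδu : N * δ ≤ N * u := mul_le_mul_of_nonneg_left hδu hN0.le
      have hNu : 0 ≤ N * u := mul_nonneg hN0.le h0u
      have p1 : (0 : ℝ) < N * u + 1 := by linarith
      have p2 : (0 : ℝ) < N * u + (1 - N * δ) := by linarith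
      have d1 : (0 : ℝ) < 1 + N * u := by linarith
      have d2 : (0 : ℝ) < 1 + N * (u - δ) := by nlinarith
      rw [inv_sub_inv p2.ne' p1.ne', div_mul_div_comm, div_mul_div_comm,
        div_eq_div_iff (mul_pos d1 d2).ne' (mul_pos hδpos (mul_pos p2 p1)).ne']
      ring
    have ciA : IntervalIntegrable (fun u : ℝ => (N * u + (1 - N * δ))⁻¹)
        MeasureTheory.volume δ (1 / 2) := by
      refine ContinuousOn.intervalIntegrable (ContinuousOn.inv₀ (by fun_prop) ?_)
      intro u hu
      rw [Set.uIcc_of_le hδh] at hu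
      nlinarith [mul_le_mul_of_nonneg_left hu.1 hN0.le]
    have ciB : IntervalIntegrable (fun u : ℝ => (N * u + 1)⁻¹)
        MeasureTheory.volume δ (1 / 2) := by
      refine ContinuousOn.intervalIntegrable (ContinuousOn.inv₀ (by fun_prop) ?_)
      intro u hu
      rw [Set.uIcc_of_le hδh] at hu
      nlinarith [mul_nonneg hN0.le (le_trans hδ0 hu.1)]
    have vA : (∫ u in δ..(1 / 2 : ℝ), (N * u + (1 - N * δ))⁻¹)
        = N⁻¹ * Real.log (N * (1 / 2 - δ) + 1) := by
      have h := intervalIntegral.integral_comp_mul_add (a := δ) (b := (1 / 2 : ℝ))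
        (fun x : ℝ => x⁻¹) hNne (1 - N * δ)
      rw [h, show N * δ + (1 - N * δ) = 1 by ring,
        show N * (1 / 2 : ℝ) + (1 - N * δ) = N * (1 / 2 - δ) + 1 by ring,
        integral_inv (zero_not_mem_uIcc one_pos (by nlinarith)), smul_eq_mul, div_one]
    rw [intervalIntegral.integral_congr hcong, intervalIntegral.integral_const_mul,
      intervalIntegral.integral_sub ciA ciB, vA, mainB]
    have pB : (0 : ℝ) < N * (1 / 2) + 1 := by nlinarith
    have pδ : (0 : ℝ) < N * δ + 1 := by nlinarith
    have pA : (0 : ℝ) < N * (1 / 2 - δ) + 1 := by nlinarith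
    rw [Real.log_div pB.ne' pδ.ne']
    have hlog : Real.log (N * (1 / 2 - δ) + 1) ≤ Real.log (N * (1 / 2) + 1) :=
      Real.log_le_log pA (by nlinarith)
    have key : 4 * N / δ * (N⁻¹ * Real.log (N * (1 / 2 - δ) + 1)
          - N⁻¹ * (Real.log (N * (1 / 2) + 1) - Real.log (N * δ + 1)))
        = (4 / δ) * Real.log (N * (1 / 2 - δ) + 1) - (4 / δ) * Real.log (N * (1 / 2) + 1)
          + (4 / δ) * Real.log (N * δ + 1) := by
      field_simp
      ring
    rw [key]
    have h40 : (0 : ℝ) < 4 / δ := by positivity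
    nlinarith [mul_le_mul_of_nonneg_left hlog h40.le]
  -- I2, case δ = 0
  have hI2' : 0 = δ → (∫ u in (0 : ℝ)..(1 / 2 : ℝ), g u) ≤ 4 * N := by
    intro h0
    have hcong : Set.EqOn g (fun u => 4 * N ^ 2 * ((N * u + 1) ^ 2)⁻¹)
        (Set.uIcc 0 (1 / 2 : ℝ)) := by
      intro u hu
      rw [Set.uIcc_of_le (by norm_num : (0 : ℝ) ≤ 1 / 2)] at hu
      have e1 : |u| = u := abs_of_nonneg hu.1
      simp only [hg, ← h0, sub_zero, e1, abs_abs]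
      have p1 : (0 : ℝ) < N * u + 1 := by nlinarith [mul_nonneg hN0.le hu.1]
      have d1 : (0 : ℝ) < 1 + N * u := by linarith
      field_simp [p1.ne']
      ring
    have hderiv : ∀ u ∈ Set.uIcc (0 : ℝ) (1 / 2 : ℝ),
        HasDerivAt (fun y : ℝ => -4 * N * (N * y + 1)⁻¹)
          (4 * N ^ 2 * ((N * u + 1) ^ 2)⁻¹) u := by
      intro u hu
      rw [Set.uIcc_of_le (by norm_num : (0 : ℝ) ≤ 1 / 2)] at hu
      have p1 : (0 : ℝ) < N * u + 1 := by nlinarith [mul_nonneg hN0.le hu.1]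
      have h1 : HasDerivAt (fun y : ℝ => N * y + 1) N u := by
        simpa using ((hasDerivAt_id u).const_mul N).add_const 1
      have h3 := HasDerivAt.const_mul (-4 * N) (h1.inv p1.ne')
      exact h3.congr_deriv (by ring)
    have cInt : IntervalIntegrable (fun u : ℝ => 4 * N ^ 2 * ((N * u + 1) ^ 2)⁻¹)
        MeasureTheory.volume 0 (1 / 2) := by
      refine ContinuousOn.intervalIntegrable (ContinuousOn.mul (by fun_prop)
        (ContinuousOn.inv₀ (by fun_prop) ?_))
      intro u hu
      rw [Set.uIcc_of_le (by norm_num : (0 : ℝ) ≤ 1 / 2)] at hu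
      nlinarith [mul_nonneg hN0.le hu.1]
    rw [intervalIntegral.integral_congr hcong,
      intervalIntegral.integral_eq_sub_of_hasDerivAt hderiv cInt]
    have p1 : (0 : ℝ) < N * (1 / 2) + 1 := by nlinarith
    have p2 : (0 : ℝ) ≤ 4 * N * (N * (1 / 2) + 1)⁻¹ := by positivity
    have e0 : N * (0 : ℝ) + 1 = 1 := by ring
    rw [e0]
    norm_num
    linarith
  -- conclusion
  have hDpos : (0 : ℝ) < 2 + N * δ := by nlinarith
  have hL2 : Real.log 2 ≤ Real.log (2 + N * δ) := Real.log_le_log (by norm_num) (by nlinarith)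
  have hLnn : 0 ≤ Real.log (2 + N * δ) :=
    le_trans (Real.log_nonneg (by norm_num)) hL2
  have hlog2 : (0.6931471803 : ℝ) < Real.log 2 := Real.log_two_gt_d9
  rcases eq_or_lt_of_le hδ0 with h0 | hδpos
  · -- δ = 0
    have hval := hI2' h0
    have hmain : (∫ u in (-(1 : ℝ) / 2)..(1 / 2), Bfun N u * Bfun N (t - u)) ≤ 8 * N := by
      calc (∫ u in (-(1 : ℝ) / 2)..(1 / 2), Bfun N u * Bfun N (t - u))
          ≤ ∫ u in (-(1 : ℝ) / 2)..(1 / 2), g u := stepA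
        _ = 2 * ∫ u in (0 : ℝ)..(1 / 2 : ℝ), g u := by rw [splitB, eB]; ring
        _ ≤ 2 * (4 * N) := by linarith
        _ = 8 * N := by ring
    rw [← h0, mul_zero, add_zero]
    have e1 : 100 * N * Real.log 2 / 2 = 50 * N * Real.log 2 := by ring
    rw [e1]
    nlinarith
  · -- δ > 0
    have hI2v := hI2 hδpos
    have hs : 0 < N * δ := by positivity
    have h1s : Real.log (N * δ + 1) ≤ Real.log (2 + N * δ) :=
      Real.log_le_log (by nlinarith) (by nlinarith)
    have hlognn : 0 ≤ Real.log (N * δ + 1) := Real.log_nonneg (by nlinarith)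
    have key2 : (2 + N * δ) * Real.log (N * δ + 1)
        ≤ 5 * (N * δ) * Real.log (2 + N * δ) := by
      rcases le_or_gt 1 (N * δ) with hge | hlt
      · nlinarith [mul_nonneg (by linarith : (0 : ℝ) ≤ 2 * (N * δ) - 2) hLnn,
          mul_nonneg (by linarith : (0 : ℝ) ≤ 2 + N * δ) (sub_nonneg.mpr h1s),
          mul_nonneg hs.le hLnn]
      · have hle : Real.log (N * δ + 1) ≤ N * δ := by
          have := Real.log_le_sub_one_of_pos (show (0 : ℝ) < N * δ + 1 by nlinarith)
          linarith
        nlinarith [mul_nonneg (by linarith : (0 : ℝ) ≤ 1 - N * δ) hlognn,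
          mul_nonneg hs.le (by linarith : (0 : ℝ) ≤ Real.log (2 + N * δ) - 0.6931471803)]
    have hfrac2 : 4 / δ * Real.log (N * δ + 1)
        ≤ 20 * N * Real.log (2 + N * δ) / (2 + N * δ) := by
      rw [div_mul_eq_mul_div, div_le_div_iff₀ hδpos hDpos]
      nlinarith [key2]
    have hfrac1 : 8 * N * Real.log (N * δ + 1) / (2 + N * δ)
        ≤ 8 * N * Real.log (2 + N * δ) / (2 + N * δ) := by
      gcongr
    have hNLD : 0 ≤ N * Real.log (2 + N * δ) / (2 + N * δ) := by positivity
    calc (∫ u in (-(1 : ℝ) / 2)..(1 / 2), Bfun N u * Bfun N (t - u))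
        ≤ ∫ u in (-(1 : ℝ) / 2)..(1 / 2), g u := stepA
      _ = 2 * ((∫ u in (0 : ℝ)..δ, g u) + ∫ u in δ..(1 / 2 : ℝ), g u) := by
          rw [splitB, eB,
            ← intervalIntegral.integral_add_adjacent_intervals (hgint 0 δ) (hgint δ (1 / 2))]
          ring
      _ ≤ 2 * (8 * N * Real.log (N * δ + 1) / (2 + N * δ)
            + 4 / δ * Real.log (N * δ + 1)) := by
          rw [hI1]
          linarith
      _ ≤ 100 * N * Real.log (2 + N * δ) / (2 + N * δ) := by
          have hfrac1' : 8 * N * Real.log (N * δ + 1) / (2 + N * δ)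
              ≤ 8 * (N * Real.log (2 + N * δ) / (2 + N * δ)) := by
            rw [show 8 * (N * Real.log (2 + N * δ) / (2 + N * δ))
              = 8 * N * Real.log (2 + N * δ) / (2 + N * δ) by ring]
            exact hfrac1
          have hfrac2' : 4 / δ * Real.log (N * δ + 1)
              ≤ 20 * (N * Real.log (2 + N * δ) / (2 + N * δ)) := by
            rw [show 20 * (N * Real.log (2 + N * δ) / (2 + N * δ))
              = 20 * N * Real.log (2 + N * δ) / (2 + N * δ) by ring]
            exact hfrac2
          rw [show 100 * N * Real.log (2 + N * δ) / (2 + N * δ)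
            = 100 * (N * Real.log (2 + N * δ) / (2 + N * δ)) by ring]
          linarith
end

section
/- There exists δ > 0 such that for every R₀ there is an R ≥ R₀ with N₂(R) − (8/3)R² ≥ δ R^{1/2}; that is, the error term N₂(R) − |P₂|R² is Ω₊(R^{1/2}). -/
/-- Number of lattice points in the dilate `R · P₂`, where
`P₂ = {(x,y) : |y| ≤ 1 - x²}`. -/
noncomputable def latticePointsParabola (R : ℝ) : ℕ :=
  Nat.card {p : ℤ × ℤ // |(p.2 : ℝ) / R| ≤ 1 - ((p.1 : ℝ) / R) ^ 2}

open Finset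

lemma exists_sqrt_neg_one (p : ℕ) (hp : p.Prime) (h4 : p % 4 = 1) :
    ∃ j : ZMod (p^2), j^2 = -1 := by
  haveI : Fact p.Prime := ⟨hp⟩
  have hsq : IsSquare (-1 : ZMod p) := (ZMod.exists_sq_eq_neg_one_iff).mpr (by omega)
  obtain ⟨i, hi⟩ := hsq
  set a : ℤ := (i.val : ℤ) with ha
  have hpd : (p:ℤ) ∣ a^2 + 1 := by
    have : ((a^2 + 1 : ℤ) : ZMod p) = 0 := by
      push_cast [ha]
      rw [ZMod.natCast_val, ZMod.cast_id]
      linear_combination -hi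
    exact (ZMod.intCast_zmod_eq_zero_iff_dvd _ p).mp this
  obtain ⟨k, hk⟩ := hpd
  have hi0 : (i : ZMod p) ≠ 0 := by
    intro h; rw [h, mul_zero] at hi
    exact (neg_ne_zero.mpr (one_ne_zero)) hi
  have h20 : (2 : ZMod p) ≠ 0 := by
    have h2 : ((2:ℕ) : ZMod p) ≠ 0 := by
      rw [Ne, ZMod.natCast_eq_zero_iff]
      intro hd
      have := Nat.le_of_dvd (by norm_num) hd
      have := hp.two_le
      omega
    simpa using h2
  have ha2 : (2 * i : ZMod p) ≠ 0 := mul_ne_zero h20 hi0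
  set u : ZMod p := (-(k : ZMod p)) * (2 * i)⁻¹ with hu
  set τ : ℤ := ((u.val : ℕ) : ℤ) with hτ
  have hkt : (p:ℤ) ∣ k + 2*a*τ := by
    have : ((k + 2*a*τ : ℤ) : ZMod p) = 0 := by
      push_cast [ha, hτ]
      rw [ZMod.natCast_val, ZMod.cast_id, ZMod.natCast_val, ZMod.cast_id, hu]
      field_simp
      ring
    exact (ZMod.intCast_zmod_eq_zero_iff_dvd _ p).mp this
  obtain ⟨s, hs⟩ := hkt
  refine ⟨((a + τ*p : ℤ) : ZMod (p^2)), ?_⟩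
  have hdvd : ((p:ℕ)^2 : ℤ) ∣ (a + τ*p)^2 + 1 := by
    have heq : ((a + τ*p)^2 + 1 : ℤ) = (p:ℤ)^2 * (s + τ^2) := by nlinarith [hs, hk]
    rw [heq]; push_cast; exact Dvd.intro _ rfl
  have h0 : (((a + τ*p)^2 + 1 : ℤ) : ZMod (p^2)) = 0 :=
    (ZMod.intCast_zmod_eq_zero_iff_dvd _ _).mpr (by push_cast at hdvd ⊢; exact hdvd)
  push_cast at h0 ⊢
  linear_combination h0

lemma two_mul_sum_val_sq (q : ℕ) [NeZero q] (j : ZMod q) (hj : j^2 = -1) :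
    2 * ∑ x : ZMod q, ((x^2).val : ℤ)
      = q * (q - ((univ.filter (fun x : ZMod q => x^2 = 0)).card : ℤ)) := by
  have hbij : Function.Bijective (fun x : ZMod q => j * x) := by
    apply Function.bijective_iff_has_inverse.mpr
    exact ⟨fun y => (-j) * y,
      fun x => by simp only []; rw [← mul_assoc, neg_mul, ← sq, hj, neg_neg, one_mul],
      fun y => by simp only []; rw [← mul_assoc, mul_neg, ← sq, hj, neg_neg, one_mul]⟩
  have hre : ∑ x : ZMod q, ((x^2).val : ℤ) = ∑ x : ZMod q, (((j*x)^2).val : ℤ) :=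
    (Fintype.sum_bijective _ hbij _ _ (fun x => rfl)).symm
  have hneg : ∀ x : ZMod q, (j*x)^2 = -(x^2) := by
    intro x; rw [mul_pow, hj]; ring
  set S := ∑ x : ZMod q, ((x^2).val : ℤ) with hS
  set c := (univ.filter (fun x : ZMod q => x^2 = 0)).card with hc
  have hcard : (univ.filter (fun x : ZMod q => ¬ x^2 = 0)).card = q - c := by
    rw [hc, Finset.filter_not, Finset.card_sdiff_of_subset (Finset.filter_subset _ _)]
    simp [ZMod.card]
  have hle2 : c ≤ q := by
    rw [hc]
    have := Finset.card_filter_le (univ : Finset (ZMod q)) (fun x : ZMod q => x^2 = 0)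
    simpa [ZMod.card] using this
  have hsum0 : ∑ x ∈ univ.filter (fun x : ZMod q => ¬ x^2 = 0), ((x^2).val : ℤ) = S := by
    rw [hS, ← Finset.sum_filter_add_sum_filter_not univ (fun x : ZMod q => x^2 = 0)]
    have : ∑ x ∈ univ.filter (fun x : ZMod q => x^2 = 0), ((x^2).val : ℤ) = 0 := by
      apply Finset.sum_eq_zero; intro x hx
      simp only [Finset.mem_filter] at hx
      simp [hx.2]
    rw [this, zero_add]
  have hval : ∀ x : ZMod q, (((j*x)^2).val : ℤ)
      = (if x^2 = 0 then 0 else (q : ℤ) - ((x^2).val : ℤ)) := by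
    intro x
    rw [hneg x, ZMod.neg_val]
    split_ifs with h
    · simp [h]
    · have hle : (x^2).val ≤ q := le_of_lt (ZMod.val_lt _)
      push_cast [Nat.cast_sub hle]
      ring
  have key : S = ((q:ℤ) - c) * q - S := by
    calc S = ∑ x : ZMod q, (((j*x)^2).val : ℤ) := hre
    _ = ∑ x : ZMod q, (if x^2 = 0 then 0 else (q : ℤ) - ((x^2).val : ℤ)) :=
        Finset.sum_congr rfl (fun x _ => hval x)
    _ = ((q:ℤ) - c) * q - S := by
        rw [Finset.sum_ite, Finset.sum_const, Finset.sum_sub_distrib, Finset.sum_const,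
          hcard, hsum0]
        simp only [smul_zero, nsmul_eq_mul]
        push_cast [Nat.cast_sub hle2]
        ring
  linarith

lemma card_sq_zero (p : ℕ) (hp : p.Prime) [NeZero (p^2)] :
    (univ.filter (fun x : ZMod (p^2) => x^2 = 0)).card = p := by
  have hmem : ∀ x : ZMod (p^2), x^2 = 0 ↔ p ∣ x.val := by
    intro x
    have hx : ((x.val : ℕ) : ZMod (p^2)) = x := by rw [ZMod.natCast_val, ZMod.cast_id]
    constructor
    · intro h
      have h2 : (((x.val^2 : ℕ)) : ZMod (p^2)) = 0 := by push_cast [hx]; exact h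
      have hdvd : p^2 ∣ x.val^2 := (ZMod.natCast_eq_zero_iff _ _).mp h2
      exact hp.dvd_of_dvd_pow (dvd_trans (dvd_pow_self p two_ne_zero) hdvd)
    · rintro ⟨t, ht⟩
      have h0 : ((p:ZMod (p^2)))^2 = 0 := by
        have h2 : (((p^2:ℕ)) : ZMod (p^2)) = 0 := ZMod.natCast_self _
        push_cast at h2; exact h2
      rw [← hx, ht]
      push_cast
      rw [mul_pow, h0, zero_mul]
  have h := Finset.card_nbij' (fun x : ZMod (p^2) => x.val / p)
    (fun t : ℕ => ((t * p : ℕ) : ZMod (p^2)))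
    (s := univ.filter (fun x : ZMod (p^2) => x^2 = 0)) (t := Finset.range p)
    ?_ ?_ ?_ ?_
  · rw [h, Finset.card_range]
  · intro x hx
    simp only [Finset.mem_coe, Finset.mem_filter, Finset.mem_range] at hx ⊢
    obtain ⟨t, ht⟩ := (hmem x).mp hx.2
    have hv : x.val < p^2 := ZMod.val_lt x
    rw [ht] at hv ⊢
    rw [Nat.mul_div_cancel_left _ hp.pos]
    have := hp.pos
    nlinarith
  · intro t ht
    simp only [Finset.mem_coe, Finset.mem_filter, Finset.mem_range] at ht ⊢
    refine ⟨Finset.mem_univ _, ?_⟩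
    rw [hmem, ZMod.val_natCast]
    have : t * p % p^2 = t * p := Nat.mod_eq_of_lt (by nlinarith [hp.pos])
    rw [this]
    exact ⟨t, by ring⟩
  · intro x hx
    simp only [Finset.mem_coe, Finset.mem_filter] at hx
    obtain ⟨t, ht⟩ := (hmem x).mp hx.2
    simp only []
    rw [ht, Nat.mul_div_cancel_left _ hp.pos, ← Nat.mul_div_cancel_left t hp.pos, ← ht,
      Nat.div_mul_cancel (ht ▸ Dvd.intro t rfl), ZMod.natCast_val, ZMod.cast_id]
  · intro t ht
    simp only [Finset.mem_coe, Finset.mem_range] at ht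
    simp only []
    rw [ZMod.val_natCast]
    have : t * p % p^2 = t * p := Nat.mod_eq_of_lt (by nlinarith [hp.pos])
    rw [this, Nat.mul_div_cancel _ hp.pos]

/-- Reindex sum over ZMod q to range q. -/
lemma sum_emod_eq_val_sum (q : ℕ) [NeZero q] :
    ∑ a ∈ range q, ((a:ℤ)^2 % (q:ℤ)) = ∑ x : ZMod q, ((x^2).val : ℤ) := by
  apply Finset.sum_nbij' (fun a => ((a : ℕ) : ZMod q)) (fun x => x.val)
  · intro a _; exact Finset.mem_univ _
  · intro x _; simpa [Finset.mem_range] using ZMod.val_lt x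
  · intro a ha; exact ZMod.val_natCast_of_lt (Finset.mem_range.mp ha)
  · intro x _; rw [ZMod.natCast_val, ZMod.cast_id]
  · intro a _
    have h1 : ((a : ZMod q))^2 = ((a^2 : ℕ) : ZMod q) := by push_cast; ring
    rw [h1, ZMod.val_natCast]
    push_cast [Int.natCast_mod]
    ring

/-- Reindex Icc 1 q over ℤ to range q over ℕ (shifted). -/
lemma sum_Icc_one_eq_range (q : ℕ) (g : ℤ → ℤ) :
    ∑ m ∈ Icc (1:ℤ) (q:ℤ), g m = ∑ a ∈ range q, g ((a:ℤ)+1) := by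
  refine Finset.sum_nbij' (i := fun m => (m-1).toNat) (j := fun a => (a:ℤ)+1) ?_ ?_ ?_ ?_ ?_
  · intro m hm; simp only [Finset.mem_Icc] at hm; simp only [Finset.mem_range]; omega
  · intro a ha; simp only [Finset.mem_range] at ha; simp only [Finset.mem_Icc]; omega
  · intro m hm; simp only [Finset.mem_Icc] at hm; omega
  · intro a _; omega
  · intro m hm
    simp only [Finset.mem_Icc] at hm
    congr 1
    omega

/-- Even function sum over symmetric interval. -/
lemma sum_Icc_neg_eq (q : ℕ) (g : ℤ → ℤ) (hg : ∀ m, g (-m) = g m) :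
    ∑ m ∈ Icc (-(q:ℤ)) (q:ℤ), g m = 2 * ∑ m ∈ Icc (1:ℤ) (q:ℤ), g m + g 0 := by
  have hsplit : Icc (-(q:ℤ)) (q:ℤ) = (Icc (1:ℤ) (q:ℤ)).image Neg.neg ∪ Icc (0:ℤ) (q:ℤ) := by
    ext x
    simp only [Finset.mem_union, Finset.mem_image, Finset.mem_Icc]
    constructor
    · intro hx
      rcases le_or_gt 0 x with h0 | h0
      · exact Or.inr ⟨h0, hx.2⟩
      · exact Or.inl ⟨-x, ⟨by omega, by omega⟩, by omega⟩
    · rintro (⟨y, ⟨h1, h2⟩, rfl⟩ | ⟨h1, h2⟩) <;> constructor <;> omega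
  have hdisj : Disjoint ((Icc (1:ℤ) (q:ℤ)).image Neg.neg) (Icc (0:ℤ) (q:ℤ)) := by
    rw [Finset.disjoint_left]
    rintro x hx hx2
    simp only [Finset.mem_image, Finset.mem_Icc] at hx hx2
    obtain ⟨y, ⟨h1, _⟩, rfl⟩ := hx
    omega
  rw [hsplit, Finset.sum_union hdisj, Finset.sum_image (by intro x _ y _ h; omega)]
  have h2 : ∑ m ∈ Icc (1:ℤ) (q:ℤ), g (-m) = ∑ m ∈ Icc (1:ℤ) (q:ℤ), g m :=
    Finset.sum_congr rfl (fun m _ => hg m)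
  have h3 : Icc (0:ℤ) (q:ℤ) = insert 0 (Icc (1:ℤ) (q:ℤ)) := by
    ext x; simp only [Finset.mem_insert, Finset.mem_Icc]; omega
  rw [h2, h3, Finset.sum_insert (by simp)]
  ring

/-- Sum of squares formula. -/
lemma six_mul_sum_sq (q : ℕ) :
    6 * ∑ a ∈ range q, ((a:ℤ)+1)^2 = (q:ℤ) * ((q:ℤ)+1) * (2*(q:ℤ)+1) := by
  induction q with
  | zero => simp
  | succ n ih =>
    rw [Finset.sum_range_succ, mul_add]
    push_cast
    push_cast at ih
    linear_combination ih

lemma key_div (q : ℕ) (hq : 0 < q) (m : ℤ) :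
    ((q:ℤ)^2 - m^2) / (q:ℤ)
      = (q:ℤ) - m^2/(q:ℤ) - (if (q:ℤ) ∣ m^2 then 0 else 1) := by
  set Q : ℤ := (q:ℤ) with hQdef
  have hQ : 0 < Q := by positivity
  have h1 : Q * (m^2 / Q) + m^2 % Q = m^2 := Int.mul_ediv_add_emod _ _
  have hr0 : 0 ≤ m^2 % Q := Int.emod_nonneg _ hQ.ne'
  have hr1 : m^2 % Q < Q := Int.emod_lt_of_pos _ hQ
  have hdvd : Q ∣ m^2 ↔ m^2 % Q = 0 := Int.dvd_iff_emod_eq_zero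
  split_ifs with h
  · have hr : m^2 % Q = 0 := hdvd.mp h
    have h2 : Q^2 - m^2 = Q * (Q - m^2 / Q) := by linear_combination h1 - hr
    rw [h2, Int.mul_ediv_cancel_left _ hQ.ne']
    ring
  · have hr : m^2 % Q ≠ 0 := fun hh => h (hdvd.mpr hh)
    have h2 : Q^2 - m^2 = (Q - m^2 % Q) + Q * (Q - m^2 / Q - 1) := by linear_combination h1
    rw [h2, Int.add_mul_ediv_left _ _ hQ.ne',
      Int.ediv_eq_zero_of_lt (by omega) (by omega)]
    ring

lemma sq_dvd_iff (p : ℕ) (hp : p.Prime) (m : ℤ) : ((p:ℤ)^2 ∣ m^2) ↔ (p:ℤ) ∣ m := by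
  have hp' : Prime (p:ℤ) := Nat.prime_iff_prime_int.mp hp
  constructor
  · intro h
    exact hp'.dvd_of_dvd_pow (dvd_trans (dvd_pow_self _ two_ne_zero) h)
  · rintro ⟨t, rfl⟩
    exact ⟨t^2, by ring⟩

lemma card_dvd_Icc (p : ℕ) (hp : 0 < p) :
    ((Icc (1:ℤ) ((p:ℤ)^2)).filter (fun m => (p:ℤ) ∣ m)).card = p := by
  have hP : (0:ℤ) < (p:ℤ) := by positivity
  have h := Finset.card_nbij' (fun m : ℤ => (m / (p:ℤ) - 1).toNat)
    (fun a : ℕ => ((a:ℤ)+1) * (p:ℤ))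
    (s := (Icc (1:ℤ) ((p:ℤ)^2)).filter (fun m => (p:ℤ) ∣ m)) (t := Finset.range p)
    ?_ ?_ ?_ ?_
  · rw [h, Finset.card_range]
  · intro m hm
    simp only [Finset.mem_coe, Finset.mem_filter, Finset.mem_Icc] at hm
    obtain ⟨⟨hm1, hm2⟩, t, rfl⟩ := hm
    simp only [Finset.mem_coe, Finset.mem_range]
    rw [Int.mul_ediv_cancel_left _ hP.ne']
    have ht1 : 1 ≤ t := by nlinarith
    have ht2 : t ≤ (p:ℤ) := by nlinarith
    omega
  · intro a ha
    simp only [Finset.mem_coe, Finset.mem_range] at ha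
    simp only [Finset.mem_coe, Finset.mem_filter, Finset.mem_Icc]
    have ha' : ((a:ℤ)+1) ≤ (p:ℤ) := by exact_mod_cast ha
    refine ⟨⟨by nlinarith, by nlinarith⟩, ⟨(a:ℤ)+1, by ring⟩⟩
  · intro m hm
    simp only [Finset.mem_coe, Finset.mem_filter, Finset.mem_Icc] at hm
    obtain ⟨⟨hm1, hm2⟩, t, rfl⟩ := hm
    dsimp only
    rw [Int.mul_ediv_cancel_left _ hP.ne']
    have ht1 : 1 ≤ t := by nlinarith
    rw [Int.toNat_of_nonneg (by omega)]
    ring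
  · intro a ha
    simp only [Finset.mem_coe, Finset.mem_range] at ha
    dsimp only
    rw [Int.mul_ediv_cancel _ hP.ne']
    simp

lemma card_F (q : ℕ) (hq : 0 < q) :
    ((((Icc (-(q:ℤ)) (q:ℤ)) ×ˢ (Icc (-(q:ℤ)) (q:ℤ))).filter
        (fun z : ℤ × ℤ => z.1^2 + (q:ℤ) * |z.2| ≤ (q:ℤ)^2)).card : ℤ)
      = ∑ m ∈ Icc (-(q:ℤ)) (q:ℤ), (2 * (((q:ℤ)^2 - m^2) / (q:ℤ)) + 1) := by
  have hQ : (0:ℤ) < (q:ℤ) := by positivity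
  set t : ℤ → ℤ := fun m => ((q:ℤ)^2 - m^2) / (q:ℤ) with ht
  have htq : ∀ m : ℤ, t m ≤ (q:ℤ) := by
    intro m
    rw [ht]
    calc ((q:ℤ)^2 - m^2) / (q:ℤ) ≤ (q:ℤ)^2 / (q:ℤ) :=
          Int.ediv_le_ediv hQ (by nlinarith [sq_nonneg m])
    _ = (q:ℤ) := by rw [sq, Int.mul_ediv_cancel _ hQ.ne']
  have hsplit : (((Icc (-(q:ℤ)) (q:ℤ)) ×ˢ (Icc (-(q:ℤ)) (q:ℤ))).filter
        (fun z : ℤ × ℤ => z.1^2 + (q:ℤ) * |z.2| ≤ (q:ℤ)^2))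
      = (Icc (-(q:ℤ)) (q:ℤ)).biUnion
          (fun m => (Icc (-(t m)) (t m)).map ⟨fun n => (m, n), fun a b hab => by
            simpa using hab⟩) := by
    ext z
    obtain ⟨m, n⟩ := z
    simp only [Finset.mem_filter, Finset.mem_product, Finset.mem_biUnion, Finset.mem_map,
      Finset.mem_Icc, Function.Embedding.coeFn_mk, Prod.mk.injEq]
    constructor
    · rintro ⟨⟨hm, hn⟩, hcond⟩
      refine ⟨m, hm, n, ?_, rfl⟩
      have : |n| ≤ t m := by
        rw [ht, Int.le_ediv_iff_mul_le hQ]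
        nlinarith [abs_nonneg n]
      constructor <;> [skip; skip] <;> cases' abs_le.mp this with h1 h2 <;> omega
    · rintro ⟨m', hm', n', hn', h⟩
      have h1 : m' = m := congrArg Prod.fst h
      have h2 : n' = n := congrArg Prod.snd h
      subst h1 h2
      have habs : |n'| ≤ t m' := abs_le.mpr hn'
      have hmul : |n'| * (q:ℤ) ≤ (q:ℤ)^2 - m'^2 := (Int.le_ediv_iff_mul_le hQ).mp habs
      have hm'2 : m'^2 ≤ (q:ℤ)^2 := by nlinarith [abs_nonneg n']
      have hn'q : |n'| ≤ (q:ℤ) := le_trans habs (htq m')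
      refine ⟨⟨hm', ?_⟩, by nlinarith⟩
      cases' abs_le.mp hn'q with h1 h2
      exact ⟨h1, h2⟩
  rw [hsplit, Finset.card_biUnion]
  · push_cast
    apply Finset.sum_congr rfl
    intro m hm
    simp only [Finset.mem_Icc] at hm
    rw [Finset.card_map, Int.card_Icc]
    have htnn : 0 ≤ t m := Int.ediv_nonneg (by nlinarith) hQ.le
    rw [Int.toNat_of_nonneg (by omega)]
    ring
  · intro a _ b _ hab
    refine Finset.disjoint_left.mpr ?_
    rintro z hz hz2
    simp only [Finset.mem_map, Function.Embedding.coeFn_mk] at hz hz2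
    obtain ⟨n1, _, rfl⟩ := hz
    obtain ⟨n2, _, h⟩ := hz2
    have : b = a := congrArg Prod.fst h
    exact hab this.symm

lemma main_count (p : ℕ) (hp : p.Prime) (h4 : p % 4 = 1) :
    3 * ((((Icc (-((p^2:ℕ):ℤ)) ((p^2:ℕ):ℤ)) ×ˢ (Icc (-((p^2:ℕ):ℤ)) ((p^2:ℕ):ℤ))).filter
        (fun z : ℤ × ℤ => z.1^2 + ((p^2:ℕ):ℤ) * |z.2| ≤ ((p^2:ℕ):ℤ)^2)).card : ℤ)
      = 8*(p:ℤ)^4 + 6*(p:ℤ) + 1 := by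
  haveI : NeZero (p^2) := ⟨pow_ne_zero 2 hp.pos.ne'⟩
  set q : ℕ := p^2 with hqdef
  have hq : 0 < q := pow_pos hp.pos 2
  set Q : ℤ := ((q:ℕ):ℤ) with hQdef
  have hQp : Q = (p:ℤ)^2 := by rw [hQdef, hqdef]; push_cast; ring
  have hQ : (0:ℤ) < Q := by positivity
  have h1 := card_F q hq
  rw [← hQdef] at h1
  have h2 := sum_Icc_neg_eq q (fun m => 2 * ((Q^2 - m^2) / Q) + 1) (by
    intro m
    have hmm : (-m)^2 = m^2 := by ring
    simp only [hmm])
  rw [← hQdef] at h2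
  have hg0 : 2 * ((Q^2 - (0:ℤ)^2) / Q) + 1 = 2*Q + 1 := by
    rw [(by ring : Q^2 - (0:ℤ)^2 = Q * Q), Int.mul_ediv_cancel_left _ hQ.ne']
  have h3 : ∑ m ∈ Icc (1:ℤ) Q, (2 * ((Q^2 - m^2) / Q) + 1)
      = ∑ m ∈ Icc (1:ℤ) Q, ((2*Q+1) - 2*(m^2/Q) - 2*(if (p:ℤ) ∣ m then 0 else 1)) := by
    apply Finset.sum_congr rfl
    intro m _
    have hkd := key_div q hq m
    rw [← hQdef] at hkd
    rw [hkd]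
    have hiff : (Q ∣ m^2) ↔ ((p:ℤ) ∣ m) := by rw [hQp]; exact sq_dvd_iff p hp m
    by_cases h : (p:ℤ) ∣ m
    · rw [if_pos (hiff.mpr h), if_pos h]; ring
    · rw [if_neg (fun hh => h (hiff.mp hh)), if_neg h]; ring
  have hcardIcc : (Icc (1:ℤ) Q).card = q := by
    rw [Int.card_Icc]; simp [hQdef]
  have hple : (p:ℤ) ≤ Q := by
    rw [hQp]; nlinarith [hp.pos, (by exact_mod_cast hp.pos : (0:ℤ) < (p:ℤ))]
  have h5 : ∑ m ∈ Icc (1:ℤ) Q, (if (p:ℤ) ∣ m then (0:ℤ) else 1) = Q - p := by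
    rw [Finset.sum_ite, Finset.sum_const, Finset.sum_const]
    simp only [smul_zero, nsmul_eq_mul, mul_one, zero_add]
    rw [Finset.filter_not, Finset.card_sdiff_of_subset (Finset.filter_subset _ _)]
    have hcd := card_dvd_Icc p hp.pos
    rw [← hQp] at hcd
    rw [hcd, hcardIcc]
    have hpq : p ≤ q := by rw [hqdef]; exact Nat.le_self_pow two_ne_zero p
    push_cast [Nat.cast_sub hpq]
    rw [← hQdef]
  set B : ℤ := ∑ m ∈ Icc (1:ℤ) Q, (m^2 / Q) with hB
  set A : ℤ := ∑ m ∈ Icc (1:ℤ) Q, (m^2 % Q) with hA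
  set C : ℤ := ∑ m ∈ Icc (1:ℤ) Q, m^2 with hC
  have hQB : Q * B = C - A := by
    rw [hB, hA, hC, Finset.mul_sum, ← Finset.sum_sub_distrib]
    apply Finset.sum_congr rfl
    intro m _
    have := Int.mul_ediv_add_emod (m^2) Q
    linarith
  have hCval : 6 * C = Q * (Q+1) * (2*Q+1) := by
    rw [hC, hQdef, sum_Icc_one_eq_range q (fun m => m^2)]
    exact six_mul_sum_sq q
  have hAval : 2 * A = Q * (Q - p) := by
    obtain ⟨j, hj⟩ := exists_sqrt_neg_one p hp h4
    have hcore := two_mul_sum_val_sq q j (by rw [hqdef] at *; exact hj)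
    have hczero : (Finset.univ.filter (fun x : ZMod q => x^2 = 0)).card = p := card_sq_zero p hp
    have hcc : ((Finset.univ.filter (fun x : ZMod q => x^2 = 0)).card : ℤ) = (p:ℤ) := by
      exact_mod_cast hczero
    rw [hA, hQdef, sum_Icc_one_eq_range q (fun m => m^2 % ((q:ℕ):ℤ))]
    have hshift : ∑ a ∈ range q, (((a:ℤ)+1)^2 % ((q:ℕ):ℤ))
        = ∑ a ∈ range q, ((a:ℤ)^2 % ((q:ℕ):ℤ)) := by
      have e1 := Finset.sum_range_succ' (fun a : ℕ => ((a:ℤ)^2 % ((q:ℕ):ℤ))) q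
      have e2 := Finset.sum_range_succ (fun a : ℕ => ((a:ℤ)^2 % ((q:ℕ):ℤ))) q
      have hqq : ((q:ℕ):ℤ)^2 % ((q:ℕ):ℤ) = 0 := by
        rw [sq]; exact Int.mul_emod_right _ _
      push_cast at e1 e2
      rw [hqq] at e2
      norm_num at e1
      push_cast
      linarith
    rw [hshift, sum_emod_eq_val_sum q, hcore, hcc, ← hQdef]
  rw [h1, h2, hg0, h3]
  rw [Finset.sum_sub_distrib, Finset.sum_sub_distrib, Finset.sum_const, hcardIcc,
    ← Finset.mul_sum, ← Finset.mul_sum, ← hB, h5]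
  simp only [nsmul_eq_mul]
  rw [← hQdef]
  have h12B : 12 * B = 2 * (Q+1) * (2*Q+1) - 6*(Q - p) := by
    have : Q * (12 * B) = Q * (2 * (Q+1) * (2*Q+1) - 6*(Q - p)) := by
      linear_combination 12 * hQB + 2 * hCval - 6 * hAval
    exact mul_left_cancel₀ hQ.ne' this
  have hQ4 : Q^2 = (p:ℤ)^4 := by rw [hQp]; ring
  nlinarith [h12B, hQ4]
lemma lattice_eq_card (q : ℕ) (hq : 0 < q) :
    latticePointsParabola ((q:ℕ):ℝ)
      = (((Icc (-(q:ℤ)) (q:ℤ)) ×ˢ (Icc (-(q:ℤ)) (q:ℤ))).filter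
        (fun z : ℤ × ℤ => z.1^2 + (q:ℤ) * |z.2| ≤ (q:ℤ)^2)).card := by
  set R : ℝ := ((q:ℕ):ℝ) with hR
  have hR0 : (0:ℝ) < R := by positivity
  have hR2 : (0:ℝ) < R^2 := by positivity
  set F := (((Icc (-(q:ℤ)) (q:ℤ)) ×ˢ (Icc (-(q:ℤ)) (q:ℤ))).filter
        (fun z : ℤ × ℤ => z.1^2 + (q:ℤ) * |z.2| ≤ (q:ℤ)^2)) with hF
  have hpred : ∀ z : ℤ × ℤ, (|(z.2 : ℝ) / R| ≤ 1 - ((z.1 : ℝ) / R) ^ 2) ↔ z ∈ F := by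
    rintro ⟨m, n⟩
    have e1 : |(n:ℝ)/R| * R^2 = |(n:ℝ)| * R := by
      rw [abs_div, abs_of_pos hR0]; field_simp
    have key : (|(n:ℝ)/R| ≤ 1 - ((m:ℝ)/R)^2) ↔ ((m:ℝ)^2 + R * |(n:ℝ)| ≤ R^2) := by
      constructor
      · intro h
        have h2 := mul_le_mul_of_nonneg_right h hR2.le
        rw [e1] at h2
        have e2 : (1 - ((m:ℝ)/R)^2) * R^2 = R^2 - (m:ℝ)^2 := by field_simp
        rw [e2] at h2
        nlinarith
      · intro h
        have h3 : |(n:ℝ)| * R ≤ R^2 - (m:ℝ)^2 := by nlinarith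
        have h4 : (|(n:ℝ)| * R) / R^2 ≤ (R^2 - (m:ℝ)^2) / R^2 := by gcongr
        have e3 : (|(n:ℝ)| * R) / R^2 = |(n:ℝ)/R| := by
          rw [abs_div, abs_of_pos hR0]; field_simp
        have e4 : (R^2 - (m:ℝ)^2) / R^2 = 1 - ((m:ℝ)/R)^2 := by field_simp
        rw [e3, e4] at h4
        exact h4
    have kint : ((m:ℝ)^2 + R * |(n:ℝ)| ≤ R^2) ↔ (m^2 + (q:ℤ) * |n| ≤ (q:ℤ)^2) := by
      rw [hR]
      constructor
      · intro h; exact_mod_cast (by push_cast [Int.cast_abs]; linarith : ((m^2 + (q:ℤ)*|n| : ℤ):ℝ) ≤ (((q:ℤ)^2 : ℤ):ℝ))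
      · intro h; have : ((m^2 + (q:ℤ)*|n| : ℤ):ℝ) ≤ (((q:ℤ)^2 : ℤ):ℝ) := by exact_mod_cast h
        push_cast [Int.cast_abs] at this; linarith
    rw [key, kint, hF]
    simp only [Finset.mem_filter, Finset.mem_product, Finset.mem_Icc]
    constructor
    · intro h
      have hq0 : (0:ℤ) < (q:ℤ) := by exact_mod_cast hq
      have hm : m^2 ≤ (q:ℤ)^2 := by nlinarith [abs_nonneg n]
      have hmb : -(q:ℤ) ≤ m ∧ m ≤ (q:ℤ) := by constructor <;> nlinarith
      have hnb : -(q:ℤ) ≤ n ∧ n ≤ (q:ℤ) := by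
        have : (q:ℤ) * |n| ≤ (q:ℤ)^2 := by nlinarith [sq_nonneg m]
        have h2 : |n| ≤ (q:ℤ) := by nlinarith [abs_nonneg n]
        cases' abs_le.mp h2 with a b; exact ⟨a, b⟩
      exact ⟨⟨hmb, hnb⟩, h⟩
    · exact fun h => h.2
  have hset : {z : ℤ × ℤ | |(z.2 : ℝ) / R| ≤ 1 - ((z.1 : ℝ) / R) ^ 2} = (↑F : Set (ℤ × ℤ)) := by
    ext z; simpa using hpred z
  have hcard : latticePointsParabola R = Nat.card (↑F : Set (ℤ × ℤ)) := by
    rw [latticePointsParabola]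
    exact Nat.card_congr (Equiv.setCongr hset)
  rw [hcard, Nat.card_coe_set_eq, Set.ncard_coe_finset]

/-- The error term `N₂(R) - |P₂| R²` is `Ω₊(R^{1/2})`. -/
theorem stmt_10 :
    ∃ δ : ℝ, 0 < δ ∧ ∀ R₀ : ℝ, ∃ R : ℝ, R₀ ≤ R ∧ 1 < R ∧
      δ * Real.sqrt R ≤ (latticePointsParabola R : ℝ) - 8 / 3 * R ^ 2 := by
  refine ⟨2, by norm_num, ?_⟩
  intro R₀
  set n : ℕ := max (⌈R₀⌉₊) 2 with hn
  obtain ⟨p, hp, hnp, hmod⟩ := Nat.exists_prime_gt_modEq_one (k := 4) n (by norm_num)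
  have h4 : p % 4 = 1 := by
    have := hmod
    unfold Nat.ModEq at this
    omega
  have hp2 : 2 ≤ p := hp.two_le
  have hp3 : 2 < p := lt_of_le_of_lt (le_max_right _ _) hnp
  refine ⟨((p^2 : ℕ) : ℝ), ?_, ?_, ?_⟩
  · calc R₀ ≤ (⌈R₀⌉₊ : ℝ) := Nat.le_ceil R₀
    _ ≤ (n : ℝ) := by exact_mod_cast le_max_left _ _
    _ ≤ ((p^2 : ℕ) : ℝ) := by
        have : n ≤ p^2 := le_trans (le_of_lt hnp) (Nat.le_self_pow two_ne_zero p)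
        exact_mod_cast this
  · have : (1:ℕ) < p^2 := by nlinarith
    exact_mod_cast this
  · have hq : 0 < p^2 := by positivity
    have hcount := main_count p hp h4
    have hlat := lattice_eq_card (p^2) hq
    have hcast : ((p^2 : ℕ) : ℤ) = ((p:ℤ))^2 := by push_cast; ring
    rw [hcast] at hlat
    -- identify the two filter expressions
    rw [hcast] at hcount
    rw [← hlat] at hcount
    -- now hcount : 3 * (latticePointsParabola ((p^2:ℕ):ℝ) : ℤ) = 8 p⁴ + 6 p + 1
    have hreal : 3 * ((latticePointsParabola ((p^2 : ℕ) : ℝ) : ℝ))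
        = 8*(p:ℝ)^4 + 6*(p:ℝ) + 1 := by exact_mod_cast hcount
    have hRsq : ((p^2 : ℕ) : ℝ) = ((p:ℝ))^2 := by push_cast; ring
    have hsqrt : Real.sqrt ((p^2 : ℕ) : ℝ) = (p:ℝ) := by
      rw [hRsq, Real.sqrt_sq (by positivity)]
    rw [hsqrt]
    have : (((p^2 : ℕ) : ℝ))^2 = (p:ℝ)^4 := by rw [hRsq]; ring
    rw [this]
    nlinarith [hreal]
end

section
/- For every positive integer M, setting R = M², the boundary of the dilate R·P₂ contains at least 4M lattice points; that is, #{(x,y) ∈ ℤ² : |x| ≤ R and |y| = R − x²/R} ≥ 4M. In particular the points (kM, ±(M² − k²)) for −M ≤ k ≤ M all lie on this boundary. -/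
/-- For `R = M²`, the boundary `{(x,y) : |x| ≤ R, |y| = R - x²/R}` of `R · P₂` contains
at least `4M` lattice points; in particular the points `(kM, ±(M² - k²))` for
`-M ≤ k ≤ M` lie on it. -/
theorem stmt_16 (M : ℕ) (hM : 0 < M) :
    4 * M ≤ Nat.card {p : ℤ × ℤ //
        |(p.1 : ℝ)| ≤ ((M : ℝ) ^ 2) ∧
        |(p.2 : ℝ)| = (M : ℝ) ^ 2 - (p.1 : ℝ) ^ 2 / (M : ℝ) ^ 2} ∧
      ∀ k : ℤ, -(M : ℤ) ≤ k → k ≤ (M : ℤ) →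
        |((k * M : ℤ) : ℝ)| ≤ (M : ℝ) ^ 2 ∧
        |(((M : ℤ) ^ 2 - k ^ 2 : ℤ) : ℝ)|
          = (M : ℝ) ^ 2 - ((k * M : ℤ) : ℝ) ^ 2 / (M : ℝ) ^ 2 := by
  have hMR : (0:ℝ) < (M:ℝ) := by exact_mod_cast hM
  have hMZ : (0:ℤ) < (M:ℤ) := by exact_mod_cast hM
  have key : ∀ k : ℤ, -(M : ℤ) ≤ k → k ≤ (M : ℤ) →
      |((k * M : ℤ) : ℝ)| ≤ (M : ℝ) ^ 2 ∧
      |(((M : ℤ) ^ 2 - k ^ 2 : ℤ) : ℝ)|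
        = (M : ℝ) ^ 2 - ((k * M : ℤ) : ℝ) ^ 2 / (M : ℝ) ^ 2 := by
    intro k h1 h2
    have hk : |(k:ℝ)| ≤ (M:ℝ) := by
      rw [abs_le]
      constructor
      · exact_mod_cast h1
      · exact_mod_cast h2
    have h2' : (k:ℝ)^2 ≤ (M:ℝ)^2 := by
      nlinarith [abs_nonneg (k:ℝ), sq_abs (k:ℝ)]
    constructor
    · push_cast
      rw [abs_mul, abs_of_nonneg hMR.le]
      nlinarith [abs_nonneg (k:ℝ)]
    · push_cast
      rw [abs_of_nonneg (by linarith)]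
      field_simp
  refine ⟨?_, key⟩
  set T : Set (ℤ × ℤ) := {p : ℤ × ℤ |
      |(p.1 : ℝ)| ≤ ((M : ℝ) ^ 2) ∧
      |(p.2 : ℝ)| = (M : ℝ) ^ 2 - (p.1 : ℝ) ^ 2 / (M : ℝ) ^ 2} with hT
  have hTfin : T.Finite := by
    apply Set.Finite.subset
      ((Set.finite_Icc (-(M:ℤ)^2) ((M:ℤ)^2)).prod (Set.finite_Icc (-(M:ℤ)^2) ((M:ℤ)^2)))
    rintro ⟨x, y⟩ ⟨hx, hy⟩
    have hx' : |(x:ℝ)| ≤ ((M:ℝ)^2) := hx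
    have hxz : -(M:ℤ)^2 ≤ x ∧ x ≤ (M:ℤ)^2 := by
      rw [abs_le] at hx'
      constructor
      · exact_mod_cast hx'.1
      · exact_mod_cast hx'.2
    have hyR : |(y:ℝ)| ≤ (M:ℝ)^2 := by
      rw [hy]
      have : (0:ℝ) ≤ (x:ℝ)^2 / (M:ℝ)^2 := by positivity
      linarith
    have hyz : -(M:ℤ)^2 ≤ y ∧ y ≤ (M:ℤ)^2 := by
      rw [abs_le] at hyR
      constructor
      · exact_mod_cast hyR.1
      · exact_mod_cast hyR.2
    exact ⟨Set.mem_Icc.2 hxz, Set.mem_Icc.2 hyz⟩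
  set A : Finset (ℤ × ℤ) :=
    (Finset.Icc (-(M:ℤ)) (M:ℤ)).image (fun k => (k * (M:ℤ), (M:ℤ)^2 - k^2)) with hA
  set B : Finset (ℤ × ℤ) :=
    (Finset.Icc (-((M:ℤ)-1)) ((M:ℤ)-1)).image
      (fun k => (k * (M:ℤ), -((M:ℤ)^2 - k^2))) with hB
  have hinj : ∀ c : ℤ, Function.Injective (fun k : ℤ => (k * (M:ℤ), c * ((M:ℤ)^2 - k^2))) := by
    intro c a b h
    have h1 := congrArg Prod.fst h
    simp only at h1
    exact mul_right_cancel₀ hMZ.ne' h1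
  have hAinj : Function.Injective (fun k : ℤ => (k * (M:ℤ), (M:ℤ)^2 - k^2)) := by
    intro a b h
    have h1 := congrArg Prod.fst h
    simp only at h1
    exact mul_right_cancel₀ hMZ.ne' h1
  have hBinj : Function.Injective (fun k : ℤ => (k * (M:ℤ), -((M:ℤ)^2 - k^2))) := by
    intro a b h
    have h1 := congrArg Prod.fst h
    simp only at h1
    exact mul_right_cancel₀ hMZ.ne' h1
  have hAcard : A.card = 2 * M + 1 := by
    rw [hA, Finset.card_image_of_injective _ hAinj, Int.card_Icc]
    omega
  have hBcard : B.card = 2 * M - 1 := by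
    rw [hB, Finset.card_image_of_injective _ hBinj, Int.card_Icc]
    omega
  have hdisj : Disjoint A B := by
    rw [Finset.disjoint_left]
    intro p hpA hpB
    simp only [hA, hB, Finset.mem_image, Finset.mem_Icc] at hpA hpB
    obtain ⟨k, ⟨hk1, hk2⟩, rfl⟩ := hpA
    obtain ⟨j, ⟨hj1, hj2⟩, hj3⟩ := hpB
    have hy2 : -((M:ℤ)^2 - j^2) = (M:ℤ)^2 - k^2 := (Prod.mk.inj hj3).2
    nlinarith [sq_nonneg k, sq_nonneg j]
  have hcard : (A ∪ B).card = 4 * M := by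
    rw [Finset.card_union_of_disjoint hdisj, hAcard, hBcard]
    omega
  have hsub : (↑(A ∪ B) : Set (ℤ × ℤ)) ⊆ T := by
    intro p hp
    simp only [Finset.coe_union, Set.mem_union, Finset.mem_coe, hA, hB,
      Finset.mem_image, Finset.mem_Icc] at hp
    rcases hp with ⟨k, ⟨hk1, hk2⟩, rfl⟩ | ⟨k, ⟨hk1, hk2⟩, rfl⟩
    · exact key k hk1 hk2
    · have hk1' : -(M:ℤ) ≤ k := by omega
      have hk2' : k ≤ (M:ℤ) := by omega
      have := key k hk1' hk2'
      refine ⟨this.1, ?_⟩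
      have h2 := this.2
      push_cast at h2 ⊢
      rw [abs_neg]
      exact h2
  calc 4 * M = (A ∪ B).card := hcard.symm
    _ = (↑(A ∪ B) : Set (ℤ × ℤ)).ncard := (Set.ncard_coe_finset _).symm
    _ ≤ T.ncard := Set.ncard_le_ncard hsub hTfin
    _ = Nat.card T := (Nat.card_coe_set_eq T).symm
end
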